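/- For three points k₄, k₅, k₆ ∈ ℝ² and the constrained minimization of (1/3)Σ‖k'_i − k_i‖² subject to collinearity C_P = det[[1,1,1],[c₄,c₅,c₆],[d₄,d₅,d₆]] = 0 via Lagrange multipliers, every critical point (k'₄,k'₅,k'₆) either is a singular point of C_P = 0 (i.e., k'₄ = k'₅ = k'₆) or consists of the orthogonal projections of k₄, k₅, k₆ onto a line through their centroid in a principal direction of their covariance matrix. -/

import Mathlib

/-- The objective: mean squared displacement of the triple `q` from the triple `k`. -/
noncomputable def obj (k q : Fin 3 → Fin 2 → ℝ) : ℝ :=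
  (1/3) * ∑ i, ((q i 0 - k i 0)^2 + (q i 1 - k i 1)^2)

/-- The collinearity polynomial `C_P` of three planar points. -/
def CP (q : Fin 3 → Fin 2 → ℝ) : ℝ :=
  (Matrix.of ![![(1:ℝ), 1, 1], ![q 0 0, q 1 0, q 2 0], ![q 0 1, q 1 1, q 2 1]]).det

/-- The dot product on `ℝ²`. -/
def dot (a b : Fin 2 → ℝ) : ℝ := a 0 * b 0 + a 1 * b 1

/-- The centroid of three planar points. -/
noncomputable def centroid3 (k : Fin 3 → Fin 2 → ℝ) : Fin 2 → ℝ := (3⁻¹ : ℝ) • (k 0 + k 1 + k 2)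

/-- The covariance matrix `∑ (k i − g)(k i − g)ᵀ` of three planar points. -/
noncomputable def covMat (k : Fin 3 → Fin 2 → ℝ) : Matrix (Fin 2) (Fin 2) ℝ :=
  Matrix.of fun r c => ∑ i, (k i r - centroid3 k r) * (k i c - centroid3 k c)

set_option maxHeartbeats 1600000
set_option maxRecDepth 8000

lemma quad_deriv {f : ℝ → ℝ} {D A B : ℝ} (hf : ∀ t, f t = D + A*t + B*t^2)
    (h0 : HasDerivAt f 0 0) : A = 0 := by
  have h1' : HasDerivAt (fun t : ℝ => D + (A*t + B*t^2)) (A*1 + B*((2:ℕ)*0^(2-1))) 0 :=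
    (((hasDerivAt_id (0:ℝ)).const_mul A).add ((hasDerivAt_pow 2 (0:ℝ)).const_mul B)).const_add D
  have hfe : f = fun t : ℝ => D + (A*t + B*t^2) := funext fun t => by rw [hf]; ring
  rw [← hfe] at h1'
  have := h1'.unique h0
  simpa using this

lemma partial_eq_zero {F : (Fin 3 → Fin 2 → ℝ) → ℝ} {k' : Fin 3 → Fin 2 → ℝ}
    (hF : DifferentiableAt ℝ F k') (hzero : fderiv ℝ F k' = 0) (u : Fin 3 → Fin 2 → ℝ)
    {D A B : ℝ} (hf : ∀ t : ℝ, F (k' + t • u) = D + A*t + B*t^2) : A = 0 := by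
  have hline : HasDerivAt (fun t : ℝ => k' + t • u) u 0 := by
    simpa using ((hasDerivAt_id (0:ℝ)).smul_const u).const_add k'
  have h0' : HasFDerivAt F (fderiv ℝ F k') (k' + (0:ℝ) • u) := by simpa using hF.hasFDerivAt
  have hcomp := HasFDerivAt.comp_hasDerivAt 0 h0' hline
  rw [hzero] at hcomp
  have hc2 : HasDerivAt (fun t : ℝ => F (k' + t • u)) 0 0 := by
    exact hcomp
  exact quad_deriv hf hc2


lemma helperCP (x0 x1 x2 y0 y1 y2 X0 X1 X2 Y0 Y1 Y2 c gx gy : ℝ)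
    (hgx : gx = (X0 + X1 + X2) / 3) (hgy : gy = (Y0 + Y1 + Y2) / 3)
    (e1 : 2/3*(x0 - X0) + c*(y1 - y2) = 0)
    (e2 : 2/3*(x1 - X1) + c*(y2 - y0) = 0)
    (e3 : 2/3*(x2 - X2) + c*(y0 - y1) = 0)
    (e4 : 2/3*(y0 - Y0) + c*(x2 - x1) = 0)
    (e5 : 2/3*(y1 - Y1) + c*(x0 - x2) = 0)
    (e6 : 2/3*(y2 - Y2) + c*(x1 - x0) = 0)
    (e7 : x1*y2 - x2*y1 - x0*y2 + x2*y0 + x0*y1 - x1*y0 = 0)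
    (hp : (x1-x0)^2 + (y1-y0)^2 ≠ 0) :
    ∃ v0 v1 μ : ℝ, v0^2 + v1^2 = 1 ∧
      (((X0-gx)^2+(X1-gx)^2+(X2-gx)^2)*v0 + ((X0-gx)*(Y0-gy)+(X1-gx)*(Y1-gy)+(X2-gx)*(Y2-gy))*v1 = μ*v0) ∧
      (((X0-gx)*(Y0-gy)+(X1-gx)*(Y1-gy)+(X2-gx)*(Y2-gy))*v0 + ((Y0-gy)^2+(Y1-gy)^2+(Y2-gy)^2)*v1 = μ*v1) ∧
      (x0 = gx + ((X0-gx)*v0 + (Y0-gy)*v1)*v0) ∧ (y0 = gy + ((X0-gx)*v0 + (Y0-gy)*v1)*v1) ∧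
      (x1 = gx + ((X1-gx)*v0 + (Y1-gy)*v1)*v0) ∧ (y1 = gy + ((X1-gx)*v0 + (Y1-gy)*v1)*v1) ∧
      (x2 = gx + ((X2-gx)*v0 + (Y2-gy)*v1)*v0) ∧ (y2 = gy + ((X2-gx)*v0 + (Y2-gy)*v1)*v1) := by
  have hL : (0:ℝ) < (x1-x0)^2 + (y1-y0)^2 := lt_of_le_of_ne (by positivity) (Ne.symm hp)
  obtain ⟨s, hs2, hspos⟩ : ∃ s : ℝ, s^2 = (x1-x0)^2 + (y1-y0)^2 ∧ 0 < s :=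
    ⟨Real.sqrt ((x1-x0)^2 + (y1-y0)^2), Real.sq_sqrt hL.le, Real.sqrt_pos.mpr hL⟩
  have hs0 : s ≠ 0 := hspos.ne'
  have keyc1 : (((X0-gx)^2+(X1-gx)^2+(X2-gx)^2)*(x1-x0) + ((X0-gx)*(Y0-gy)+(X1-gx)*(Y1-gy)+(X2-gx)*(Y2-gy))*(y1-y0))*s^2 = (((X0-gx)*(x1-x0)+(Y0-gy)*(y1-y0))^2 + ((X1-gx)*(x1-x0)+(Y1-gy)*(y1-y0))^2 + ((X2-gx)*(x1-x0)+(Y2-gy)*(y1-y0))^2)*(x1-x0) := by linear_combination ((-1)*x0*X0^2 + 2*x0*X0*gx + (-1)*x0*X1^2 + 2*x0*X1*gx + (-1)*x0*X2^2 + 2*x0*X2*gx + (-3)*x0*gx^2 + 1*x1*X0^2 + (-2)*x1*X0*gx + 1*x1*X1^2 + (-2)*x1*X1*gx + 1*x1*X2^2 + (-2)*x1*X2*gx + 3*x1*gx^2 + (-1)*y0*X0*Y0 + 1*y0*X0*gy + (-1)*y0*X1*Y1 + 1*y0*X1*gy + (-1)*y0*X2*Y2 + 1*y0*X2*gy + 1*y0*Y0*gx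 + 1*y0*Y1*gx + 1*y0*Y2*gx + (-3)*y0*gx*gy + 1*y1*X0*Y0 + (-1)*y1*X0*gy + 1*y1*X1*Y1 + (-1)*y1*X1*gy + 1*y1*X2*Y2 + (-1)*y1*X2*gy + (-1)*y1*Y0*gx + (-1)*y1*Y1*gx + (-1)*y1*Y2*gx + 3*y1*gx*gy)*hs2 + ((-1)*x0^2*y0*Y0 + (-1)*x0^2*y0*Y1 + (-1)*x0^2*y0*Y2 + 3*x0^2*y0*gy + 1*x0^2*y1*Y0 + 1*x0^2*y1*Y1 + 1*x0^2*y1*Y2 + (-3)*x0^2*y1*gy + 2*x0*x1*y0*Y0 + 2*x0*x1*y0*Y1 + 2*x0*x1*y0*Y2 + (-6)*x0*x1*y0*gy + (-2)*x0*x1*y1*Y0 + (-2)*x0*x1*y1*Y1 + (-2)*x0*x1*y1*Y2 + 6*x0*x1*y1*gy + 1*x0*y0^2*X0 + 1*x0*y0^2*X1 + 1*x0*y0^2*X2 + (-3)*x0*y0^2*gx + (-2)*x0*y0*y1*X0 + (-2)*x0*y0*y1*X1 + (-2)*x0*y0*y1*X2 + 6*x0*y0*y1*gx + 1*x0*y1^2*X0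 + 1*x0*y1^2*X1 + 1*x0*y1^2*X2 + (-3)*x0*y1^2*gx + (-1)*x1^2*y0*Y0 + (-1)*x1^2*y0*Y1 + (-1)*x1^2*y0*Y2 + 3*x1^2*y0*gy + 1*x1^2*y1*Y0 + 1*x1^2*y1*Y1 + 1*x1^2*y1*Y2 + (-3)*x1^2*y1*gy + (-1)*x1*y0^2*X0 + (-1)*x1*y0^2*X1 + (-1)*x1*y0^2*X2 + 3*x1*y0^2*gx + 2*x1*y0*y1*X0 + 2*x1*y0*y1*X1 + 2*x1*y0*y1*X2 + (-6)*x1*y0*y1*gx + (-1)*x1*y1^2*X0 + (-1)*x1*y1^2*X1 + (-1)*x1*y1^2*X2 + 3*x1*y1^2*gx + 1*y0^3*Y0 + 1*y0^3*Y1 + 1*y0^3*Y2 + (-3)*y0^3*gy + (-3)*y0^2*y1*Y0 + (-3)*y0^2*y1*Y1 + (-3)*y0^2*y1*Y2 + 9*y0^2*y1*gy + 3*y0*y1^2*Y0 + 3*y0*y1^2*Y1 + 3*y0*y1^2*Y2 + (-9)*y0*y1^2*gy + (-1)*y1^3*Y0 + (-1)*y1^3*Y1 + (-1)*y1^3*Y2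 + 3*y1^3*gy)*hgx + ((-1)*x0*y0^2*Y0 + (-1)*x0*y0^2*Y1 + (-1)*x0*y0^2*Y2 + 3*x0*y0^2*gy + 2*x0*y0*y1*Y0 + 2*x0*y0*y1*Y1 + 2*x0*y0*y1*Y2 + (-6)*x0*y0*y1*gy + (-1)*x0*y1^2*Y0 + (-1)*x0*y1^2*Y1 + (-1)*x0*y1^2*Y2 + 3*x0*y1^2*gy + 1*x1*y0^2*Y0 + 1*x1*y0^2*Y1 + 1*x1*y0^2*Y2 + (-3)*x1*y0^2*gy + (-2)*x1*y0*y1*Y0 + (-2)*x1*y0*y1*Y1 + (-2)*x1*y0*y1*Y2 + 6*x1*y0*y1*gy + 1*x1*y1^2*Y0 + 1*x1*y1^2*Y1 + 1*x1*y1^2*Y2 + (-3)*x1*y1^2*gy)*hgy + (1*x0^2*y0^2 + (-2)*x0^2*y0*y1 + (-1)*x0^2*y0*Y0 + (1/2)*x0^2*y0*Y1 + (1/2)*x0^2*y0*Y2 + 1*x0^2*y1^2 + 1*x0^2*y1*Y0 + (-1/2)*x0^2*y1*Y1 + (-1/2)*x0^2*y1*Y2 + (-1)*x0*x1*y0^2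 + 2*x0*x1*y0*y1 + 2*x0*x1*y0*Y0 + (-1)*x0*x1*y0*Y1 + (-1)*x0*x1*y0*Y2 + (-1)*x0*x1*y1^2 + (-2)*x0*x1*y1*Y0 + 1*x0*x1*y1*Y1 + 1*x0*x1*y1*Y2 + (3/2)*x0*y0^2*y1*c + (-3/2)*x0*y0^2*y2*c + 1*x0*y0^2*X0 + (-1)*x0*y0^2*X1 + (-1)*x0*y0^2*X2 + (-3)*x0*y0*y1^2*c + 3*x0*y0*y1*y2*c + (-2)*x0*y0*y1*X0 + 2*x0*y0*y1*X1 + 2*x0*y0*y1*X2 + (3/2)*x0*y1^3*c + (-3/2)*x0*y1^2*y2*c + 1*x0*y1^2*X0 + (-1)*x0*y1^2*X1 + (-1)*x0*y1^2*X2 + (-1)*x1^2*y0*Y0 + (1/2)*x1^2*y0*Y1 + (1/2)*x1^2*y0*Y2 + 1*x1^2*y1*Y0 + (-1/2)*x1^2*y1*Y1 + (-1/2)*x1^2*y1*Y2 + (-3/2)*x1*y0^2*y1*c + (3/2)*x1*y0^2*y2*c + (-1)*x1*y0^2*X0 + 1*x1*y0^2*X1 + 1*x1*y0^2*X2 + 3*x1*y0*y1^2*c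 + (-3)*x1*y0*y1*y2*c + 2*x1*y0*y1*X0 + (-2)*x1*y0*y1*X1 + (-2)*x1*y0*y1*X2 + (-3/2)*x1*y1^3*c + (3/2)*x1*y1^2*y2*c + (-1)*x1*y1^2*X0 + 1*x1*y1^2*X1 + 1*x1*y1^2*X2 + 1*y0^3*Y0 + (-1/2)*y0^3*Y1 + (-1/2)*y0^3*Y2 + (-3)*y0^2*y1*Y0 + (3/2)*y0^2*y1*Y1 + (3/2)*y0^2*y1*Y2 + 3*y0*y1^2*Y0 + (-3/2)*y0*y1^2*Y1 + (-3/2)*y0*y1^2*Y2 + (-1)*y1^3*Y0 + (1/2)*y1^3*Y1 + (1/2)*y1^3*Y2)*e1 + ((-1)*x0^2*y0^2 + 2*x0^2*y0*y1 + (1/2)*x0^2*y0*Y0 + (-1)*x0^2*y0*Y1 + (1/2)*x0^2*y0*Y2 + (-1)*x0^2*y1^2 + (-1/2)*x0^2*y1*Y0 + 1*x0^2*y1*Y1 + (-1/2)*x0^2*y1*Y2 + 2*x0*x1*y0^2 + (-4)*x0*x1*y0*y1 + (-1)*x0*x1*y0*Y0 + 2*x0*x1*y0*Y1 + (-1)*x0*x1*y0*Y2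 + 2*x0*x1*y1^2 + 1*x0*x1*y1*Y0 + (-2)*x0*x1*y1*Y1 + 1*x0*x1*y1*Y2 + (-3/2)*x0*y0^3*c + (3/2)*x0*y0^2*y1*c + 3*x0*y0^2*y2*c + 1*x0*y0^2*X1 + (-1)*x0*y0^2*X2 + (3/2)*x0*y0*y1^2*c + (-6)*x0*y0*y1*y2*c + (-2)*x0*y0*y1*X1 + 2*x0*y0*y1*X2 + (-3/2)*x0*y1^3*c + 3*x0*y1^2*y2*c + 1*x0*y1^2*X1 + (-1)*x0*y1^2*X2 + (-1)*x1^2*y0^2 + 2*x1^2*y0*y1 + (1/2)*x1^2*y0*Y0 + (-1)*x1^2*y0*Y1 + (1/2)*x1^2*y0*Y2 + (-1)*x1^2*y1^2 + (-1/2)*x1^2*y1*Y0 + 1*x1^2*y1*Y1 + (-1/2)*x1^2*y1*Y2 + (3/2)*x1*y0^3*c + (-3/2)*x1*y0^2*y1*c + (-3)*x1*y0^2*y2*c + (-1)*x1*y0^2*X1 + 1*x1*y0^2*X2 + (-3/2)*x1*y0*y1^2*c + 6*x1*y0*y1*y2*c + 2*x1*y0*y1*X1 + (-2)*x1*y0*y1*X2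 + (3/2)*x1*y1^3*c + (-3)*x1*y1^2*y2*c + (-1)*x1*y1^2*X1 + 1*x1*y1^2*X2 + (-1/2)*y0^3*Y0 + 1*y0^3*Y1 + (-1/2)*y0^3*Y2 + (3/2)*y0^2*y1*Y0 + (-3)*y0^2*y1*Y1 + (3/2)*y0^2*y1*Y2 + (-3/2)*y0*y1^2*Y0 + 3*y0*y1^2*Y1 + (-3/2)*y0*y1^2*Y2 + (1/2)*y1^3*Y0 + (-1)*y1^3*Y1 + (1/2)*y1^3*Y2)*e2 + ((-1)*x0^2*y0^2 + 2*x0^2*y0*y1 + (1/2)*x0^2*y0*Y0 + (1/2)*x0^2*y0*Y1 + (-1)*x0^2*y0*Y2 + (-1)*x0^2*y1^2 + (-1/2)*x0^2*y1*Y0 + (-1/2)*x0^2*y1*Y1 + 1*x0^2*y1*Y2 + (-1)*x0*x1*y0*Y0 + (-1)*x0*x1*y0*Y1 + 2*x0*x1*y0*Y2 + 1*x0*x1*y1*Y0 + 1*x0*x1*y1*Y1 + (-2)*x0*x1*y1*Y2 + 1*x0*x2*y0^2 + (-2)*x0*x2*y0*y1 + 1*x0*x2*y1^2 + 3*x0*y0^3*c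 + (-9)*x0*y0^2*y1*c + 1*x0*y0^2*X2 + 9*x0*y0*y1^2*c + (-2)*x0*y0*y1*X2 + (-3)*x0*y1^3*c + 1*x0*y1^2*X2 + 1*x1^2*y0^2 + (-2)*x1^2*y0*y1 + (1/2)*x1^2*y0*Y0 + (1/2)*x1^2*y0*Y1 + (-1)*x1^2*y0*Y2 + 1*x1^2*y1^2 + (-1/2)*x1^2*y1*Y0 + (-1/2)*x1^2*y1*Y1 + 1*x1^2*y1*Y2 + (-1)*x1*x2*y0^2 + 2*x1*x2*y0*y1 + (-1)*x1*x2*y1^2 + (-3)*x1*y0^3*c + 9*x1*y0^2*y1*c + (-1)*x1*y0^2*X2 + (-9)*x1*y0*y1^2*c + 2*x1*y0*y1*X2 + 3*x1*y1^3*c + (-1)*x1*y1^2*X2 + (-1/2)*y0^3*Y0 + (-1/2)*y0^3*Y1 + 1*y0^3*Y2 + (3/2)*y0^2*y1*Y0 + (3/2)*y0^2*y1*Y1 + (-3)*y0^2*y1*Y2 + (-3/2)*y0*y1^2*Y0 + (-3/2)*y0*y1^2*Y1 + 3*y0*y1^2*Y2 + (1/2)*y1^3*Y0 + (1/2)*y1^3*Y1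 + (-1)*y1^3*Y2)*e3 + ((-1)*x0^3*y0 + 1*x0^3*y1 + (5/2)*x0^2*x1*y0 + (-5/2)*x0^2*x1*y1 + (1/2)*x0^2*x2*y0 + (-1/2)*x0^2*x2*y1 + (-9/4)*x0^2*y0*y1*c + (9/4)*x0^2*y0*y2*c + (9/4)*x0^2*y1^2*c + (-9/4)*x0^2*y1*y2*c + (-2)*x0*x1^2*y0 + 2*x0*x1^2*y1 + (-1)*x0*x1*x2*y0 + 1*x0*x1*x2*y1 + (3/2)*x0*x1*y0^2*c + (3/2)*x0*x1*y0*y1*c + (-9/2)*x0*x1*y0*y2*c + (-3)*x0*x1*y1^2*c + (9/2)*x0*x1*y1*y2*c + (-3/2)*x0*x2*y0^2*c + 3*x0*x2*y0*y1*c + (-3/2)*x0*x2*y1^2*c + (-1)*x0*y0^2*y1 + (-1)*x0*y0^2*Y0 + 1*x0*y0^2*Y1 + 1*x0*y0^2*Y2 + 2*x0*y0*y1^2 + 2*x0*y0*y1*Y0 + (-2)*x0*y0*y1*Y1 + (-2)*x0*y0*y1*Y2 + (-1)*x0*y1^3 + (-1)*x0*y1^2*Y0 + 1*x0*y1^2*Y1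 + 1*x0*y1^2*Y2 + (1/2)*x1^3*y0 + (-1/2)*x1^3*y1 + (1/2)*x1^2*x2*y0 + (-1/2)*x1^2*x2*y1 + (-3/2)*x1^2*y0^2*c + (3/4)*x1^2*y0*y1*c + (9/4)*x1^2*y0*y2*c + (3/4)*x1^2*y1^2*c + (-9/4)*x1^2*y1*y2*c + (3/2)*x1*x2*y0^2*c + (-3)*x1*x2*y0*y1*c + (3/2)*x1*x2*y1^2*c + (1/2)*x1*y0^3 + (-1/2)*x1*y0^2*y1 + 1*x1*y0^2*Y0 + (-1)*x1*y0^2*Y1 + (-1)*x1*y0^2*Y2 + (-1/2)*x1*y0*y1^2 + (-2)*x1*y0*y1*Y0 + 2*x1*y0*y1*Y1 + 2*x1*y0*y1*Y2 + (1/2)*x1*y1^3 + 1*x1*y1^2*Y0 + (-1)*x1*y1^2*Y1 + (-1)*x1*y1^2*Y2 + (-1/2)*x2*y0^3 + (3/2)*x2*y0^2*y1 + (-3/2)*x2*y0*y1^2 + (1/2)*x2*y1^3 + (9/4)*y0^3*y1*c + (-9/4)*y0^3*y2*c + (-27/4)*y0^2*y1^2*c + (27/4)*y0^2*y1*y2*c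 + (27/4)*y0*y1^3*c + (-27/4)*y0*y1^2*y2*c + (-9/4)*y1^4*c + (9/4)*y1^3*y2*c)*e4 + ((1/2)*x0^3*y0 + (-1/2)*x0^3*y1 + (-2)*x0^2*x1*y0 + 2*x0^2*x1*y1 + (1/2)*x0^2*x2*y0 + (-1/2)*x0^2*x2*y1 + (3/4)*x0^2*y0^2*c + (3/4)*x0^2*y0*y1*c + (-9/4)*x0^2*y0*y2*c + (-3/2)*x0^2*y1^2*c + (9/4)*x0^2*y1*y2*c + (5/2)*x0*x1^2*y0 + (-5/2)*x0*x1^2*y1 + (-1)*x0*x1*x2*y0 + 1*x0*x1*x2*y1 + (-9/2)*x0*x1*y0^2*c + (9/2)*x0*x1*y0*y1*c + (9/2)*x0*x1*y0*y2*c + (-9/2)*x0*x1*y1*y2*c + 3*x0*x2*y0^2*c + (-6)*x0*x2*y0*y1*c + 3*x0*x2*y1^2*c + (1/2)*x0*y0^3 + (-3/2)*x0*y0^2*y1 + (-1)*x0*y0^2*Y1 + 1*x0*y0^2*Y2 + (3/2)*x0*y0*y1^2 + 2*x0*y0*y1*Y1 + (-2)*x0*y0*y1*Y2 + (-1/2)*x0*y1^3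 + (-1)*x0*y1^2*Y1 + 1*x0*y1^2*Y2 + (-1)*x1^3*y0 + 1*x1^3*y1 + (1/2)*x1^2*x2*y0 + (-1/2)*x1^2*x2*y1 + (15/4)*x1^2*y0^2*c + (-21/4)*x1^2*y0*y1*c + (-9/4)*x1^2*y0*y2*c + (3/2)*x1^2*y1^2*c + (9/4)*x1^2*y1*y2*c + (-3)*x1*x2*y0^2*c + 6*x1*x2*y0*y1*c + (-3)*x1*x2*y1^2*c + 1*x1*y0^2*Y1 + (-1)*x1*y0^2*Y2 + (-2)*x1*y0*y1*Y1 + 2*x1*y0*y1*Y2 + 1*x1*y1^2*Y1 + (-1)*x1*y1^2*Y2 + (-1/2)*x2*y0^3 + (3/2)*x2*y0^2*y1 + (-3/2)*x2*y0*y1^2 + (1/2)*x2*y1^3 + (-9/4)*y0^4*c + (27/4)*y0^3*y1*c + (9/4)*y0^3*y2*c + (-27/4)*y0^2*y1^2*c + (-27/4)*y0^2*y1*y2*c + (9/4)*y0*y1^3*c + (27/4)*y0*y1^2*y2*c + (-9/4)*y1^3*y2*c)*e5 + ((1/2)*x0^3*y0 + (-1/2)*x0^3*y1 + (-1/2)*x0^2*x1*y0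 + (1/2)*x0^2*x1*y1 + (-1)*x0^2*x2*y0 + 1*x0^2*x2*y1 + (3/4)*x0^2*y0^2*c + (-3/2)*x0^2*y0*y1*c + (3/4)*x0^2*y1^2*c + (-1/2)*x0*x1^2*y0 + (1/2)*x0*x1^2*y1 + 2*x0*x1*x2*y0 + (-2)*x0*x1*x2*y1 + (-3/2)*x0*x1*y0^2*c + 3*x0*x1*y0*y1*c + (-3/2)*x0*x1*y1^2*c + (1/2)*x0*y0^3 + (1/2)*x0*y0^2*y1 + (-1)*x0*y0^2*y2 + (-1)*x0*y0^2*Y2 + (-5/2)*x0*y0*y1^2 + 2*x0*y0*y1*y2 + 2*x0*y0*y1*Y2 + (3/2)*x0*y1^3 + (-1)*x0*y1^2*y2 + (-1)*x0*y1^2*Y2 + (1/2)*x1^3*y0 + (-1/2)*x1^3*y1 + (-1)*x1^2*x2*y0 + 1*x1^2*x2*y1 + (3/4)*x1^2*y0^2*c + (-3/2)*x1^2*y0*y1*c + (3/4)*x1^2*y1^2*c + (-3/2)*x1*y0^3 + (5/2)*x1*y0^2*y1 + 1*x1*y0^2*y2 + 1*x1*y0^2*Y2 + (-1/2)*x1*y0*y1^2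 + (-2)*x1*y0*y1*y2 + (-2)*x1*y0*y1*Y2 + (-1/2)*x1*y1^3 + 1*x1*y1^2*y2 + 1*x1*y1^2*Y2 + 1*x2*y0^3 + (-3)*x2*y0^2*y1 + 3*x2*y0*y1^2 + (-1)*x2*y1^3 + (9/4)*y0^4*c + (-9)*y0^3*y1*c + (27/2)*y0^2*y1^2*c + (-9)*y0*y1^3*c + (9/4)*y1^4*c)*e6 + ((-9/4)*x0^2*y0*c^2 + (1/3)*x0^2*y0 + (9/4)*x0^2*y1*c^2 + (-1/3)*x0^2*y1 + (9/2)*x0*x2*y0*c^2 + (-2/3)*x0*x2*y0 + (-9/2)*x0*x2*y1*c^2 + (2/3)*x0*x2*y1 + (9/4)*x1^2*y0*c^2 + (-1/3)*x1^2*y0 + (-9/4)*x1^2*y1*c^2 + (1/3)*x1^2*y1 + (-9/2)*x1*x2*y0*c^2 + (2/3)*x1*x2*y0 + (9/2)*x1*x2*y1*c^2 + (-2/3)*x1*x2*y1 + (-9/4)*y0^3*c^2 + (1/3)*y0^3 + (9/4)*y0^2*y1*c^2 + (-1/3)*y0^2*y1 + (9/2)*y0^2*y2*c^2 + (-2/3)*y0^2*y2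 + (9/4)*y0*y1^2*c^2 + (-1/3)*y0*y1^2 + (-9)*y0*y1*y2*c^2 + (4/3)*y0*y1*y2 + (-9/4)*y1^3*c^2 + (1/3)*y1^3 + (9/2)*y1^2*y2*c^2 + (-2/3)*y1^2*y2)*e7
  have keyc2 : (((X0-gx)*(Y0-gy)+(X1-gx)*(Y1-gy)+(X2-gx)*(Y2-gy))*(x1-x0) + ((Y0-gy)^2+(Y1-gy)^2+(Y2-gy)^2)*(y1-y0))*s^2 = (((X0-gx)*(x1-x0)+(Y0-gy)*(y1-y0))^2 + ((X1-gx)*(x1-x0)+(Y1-gy)*(y1-y0))^2 + ((X2-gx)*(x1-x0)+(Y2-gy)*(y1-y0))^2)*(y1-y0) := by linear_combination ((-1)*x0*X0*Y0 + 1*x0*X0*gy + (-1)*x0*X1*Y1 + 1*x0*X1*gy + (-1)*x0*X2*Y2 + 1*x0*X2*gy + 1*x0*Y0*gx + 1*x0*Y1*gx + 1*x0*Y2*gx + (-3)*x0*gx*gy + 1*x1*X0*Y0 + (-1)*x1*X0*gy + 1*x1*X1*Y1 + (-1)*x1*X1*gy + 1*x1*X2*Y2 + (-1)*x1*X2*gy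 + (-1)*x1*Y0*gx + (-1)*x1*Y1*gx + (-1)*x1*Y2*gx + 3*x1*gx*gy + (-1)*y0*Y0^2 + 2*y0*Y0*gy + (-1)*y0*Y1^2 + 2*y0*Y1*gy + (-1)*y0*Y2^2 + 2*y0*Y2*gy + (-3)*y0*gy^2 + 1*y1*Y0^2 + (-2)*y1*Y0*gy + 1*y1*Y1^2 + (-2)*y1*Y1*gy + 1*y1*Y2^2 + (-2)*y1*Y2*gy + 3*y1*gy^2)*hs2 + (1*x0^3*Y0 + 1*x0^3*Y1 + 1*x0^3*Y2 + (-3)*x0^3*gy + (-3)*x0^2*x1*Y0 + (-3)*x0^2*x1*Y1 + (-3)*x0^2*x1*Y2 + 9*x0^2*x1*gy + (-1)*x0^2*y0*X0 + (-1)*x0^2*y0*X1 + (-1)*x0^2*y0*X2 + 3*x0^2*y0*gx + 1*x0^2*y1*X0 + 1*x0^2*y1*X1 + 1*x0^2*y1*X2 + (-3)*x0^2*y1*gx + 3*x0*x1^2*Y0 + 3*x0*x1^2*Y1 + 3*x0*x1^2*Y2 + (-9)*x0*x1^2*gy + 2*x0*x1*y0*X0 + 2*x0*x1*y0*X1 +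 2*x0*x1*y0*X2 + (-6)*x0*x1*y0*gx + (-2)*x0*x1*y1*X0 + (-2)*x0*x1*y1*X1 + (-2)*x0*x1*y1*X2 + 6*x0*x1*y1*gx + (-1)*x0*y0^2*Y0 + (-1)*x0*y0^2*Y1 + (-1)*x0*y0^2*Y2 + 3*x0*y0^2*gy + 2*x0*y0*y1*Y0 + 2*x0*y0*y1*Y1 + 2*x0*y0*y1*Y2 + (-6)*x0*y0*y1*gy + (-1)*x0*y1^2*Y0 + (-1)*x0*y1^2*Y1 + (-1)*x0*y1^2*Y2 + 3*x0*y1^2*gy + (-1)*x1^3*Y0 + (-1)*x1^3*Y1 + (-1)*x1^3*Y2 + 3*x1^3*gy + (-1)*x1^2*y0*X0 + (-1)*x1^2*y0*X1 + (-1)*x1^2*y0*X2 + 3*x1^2*y0*gx + 1*x1^2*y1*X0 + 1*x1^2*y1*X1 + 1*x1^2*y1*X2 + (-3)*x1^2*y1*gx + 1*x1*y0^2*Y0 + 1*x1*y0^2*Y1 + 1*x1*y0^2*Y2 + (-3)*x1*y0^2*gy + (-2)*x1*y0*y1*Y0 + (-2)*x1*y0*y1*Y1 + (-2)*x1*y0*y1*Y2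 + 6*x1*y0*y1*gy + 1*x1*y1^2*Y0 + 1*x1*y1^2*Y1 + 1*x1*y1^2*Y2 + (-3)*x1*y1^2*gy)*hgx + (1*x0^2*y0*Y0 + 1*x0^2*y0*Y1 + 1*x0^2*y0*Y2 + (-3)*x0^2*y0*gy + (-1)*x0^2*y1*Y0 + (-1)*x0^2*y1*Y1 + (-1)*x0^2*y1*Y2 + 3*x0^2*y1*gy + (-2)*x0*x1*y0*Y0 + (-2)*x0*x1*y0*Y1 + (-2)*x0*x1*y0*Y2 + 6*x0*x1*y0*gy + 2*x0*x1*y1*Y0 + 2*x0*x1*y1*Y1 + 2*x0*x1*y1*Y2 + (-6)*x0*x1*y1*gy + 1*x1^2*y0*Y0 + 1*x1^2*y0*Y1 + 1*x1^2*y0*Y2 + (-3)*x1^2*y0*gy + (-1)*x1^2*y1*Y0 + (-1)*x1^2*y1*Y1 + (-1)*x1^2*y1*Y2 + 3*x1^2*y1*gy)*hgy + ((-1)*x0^3*y0 + 1*x0^3*y1 + 1*x0^3*Y0 + (-1/2)*x0^3*Y1 + (-1/2)*x0^3*Y2 + 2*x0^2*x1*y0 + (-2)*x0^2*x1*y1 +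 (-3)*x0^2*x1*Y0 + (3/2)*x0^2*x1*Y1 + (3/2)*x0^2*x1*Y2 + (-3/2)*x0^2*y0*y1*c + (3/2)*x0^2*y0*y2*c + (-1)*x0^2*y0*X0 + 1*x0^2*y0*X1 + 1*x0^2*y0*X2 + (3/2)*x0^2*y1^2*c + (-3/2)*x0^2*y1*y2*c + 1*x0^2*y1*X0 + (-1)*x0^2*y1*X1 + (-1)*x0^2*y1*X2 + (-1)*x0*x1^2*y0 + 1*x0*x1^2*y1 + 3*x0*x1^2*Y0 + (-3/2)*x0*x1^2*Y1 + (-3/2)*x0*x1^2*Y2 + 3*x0*x1*y0*y1*c + (-3)*x0*x1*y0*y2*c + 2*x0*x1*y0*X0 + (-2)*x0*x1*y0*X1 + (-2)*x0*x1*y0*X2 + (-3)*x0*x1*y1^2*c + 3*x0*x1*y1*y2*c + (-2)*x0*x1*y1*X0 + 2*x0*x1*y1*X1 + 2*x0*x1*y1*X2 + (-1)*x0*y0^2*Y0 + (1/2)*x0*y0^2*Y1 + (1/2)*x0*y0^2*Y2 + 2*x0*y0*y1*Y0 + (-1)*x0*y0*y1*Y1 + (-1)*x0*y0*y1*Y2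 + (-1)*x0*y1^2*Y0 + (1/2)*x0*y1^2*Y1 + (1/2)*x0*y1^2*Y2 + (-1)*x1^3*Y0 + (1/2)*x1^3*Y1 + (1/2)*x1^3*Y2 + (-3/2)*x1^2*y0*y1*c + (3/2)*x1^2*y0*y2*c + (-1)*x1^2*y0*X0 + 1*x1^2*y0*X1 + 1*x1^2*y0*X2 + (3/2)*x1^2*y1^2*c + (-3/2)*x1^2*y1*y2*c + 1*x1^2*y1*X0 + (-1)*x1^2*y1*X1 + (-1)*x1^2*y1*X2 + 1*x1*y0^2*Y0 + (-1/2)*x1*y0^2*Y1 + (-1/2)*x1*y0^2*Y2 + (-2)*x1*y0*y1*Y0 + 1*x1*y0*y1*Y1 + 1*x1*y0*y1*Y2 + 1*x1*y1^2*Y0 + (-1/2)*x1*y1^2*Y1 + (-1/2)*x1*y1^2*Y2)*e1 + (1*x0^3*y0 + (-1)*x0^3*y1 + (-1/2)*x0^3*Y0 + 1*x0^3*Y1 + (-1/2)*x0^3*Y2 + (-3)*x0^2*x1*y0 + 3*x0^2*x1*y1 + (3/2)*x0^2*x1*Y0 + (-3)*x0^2*x1*Y1 + (3/2)*x0^2*x1*Y2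 + (3/2)*x0^2*y0^2*c + (-3)*x0^2*y0*y2*c + (-1)*x0^2*y0*X1 + 1*x0^2*y0*X2 + (-3/2)*x0^2*y1^2*c + 3*x0^2*y1*y2*c + 1*x0^2*y1*X1 + (-1)*x0^2*y1*X2 + 3*x0*x1^2*y0 + (-3)*x0*x1^2*y1 + (-3/2)*x0*x1^2*Y0 + 3*x0*x1^2*Y1 + (-3/2)*x0*x1^2*Y2 + (-3)*x0*x1*y0^2*c + 6*x0*x1*y0*y2*c + 2*x0*x1*y0*X1 + (-2)*x0*x1*y0*X2 + 3*x0*x1*y1^2*c + (-6)*x0*x1*y1*y2*c + (-2)*x0*x1*y1*X1 + 2*x0*x1*y1*X2 + (1/2)*x0*y0^2*Y0 + (-1)*x0*y0^2*Y1 + (1/2)*x0*y0^2*Y2 + (-1)*x0*y0*y1*Y0 + 2*x0*y0*y1*Y1 + (-1)*x0*y0*y1*Y2 + (1/2)*x0*y1^2*Y0 + (-1)*x0*y1^2*Y1 + (1/2)*x0*y1^2*Y2 + (-1)*x1^3*y0 + 1*x1^3*y1 + (1/2)*x1^3*Y0 + (-1)*x1^3*Y1 + (1/2)*x1^3*Y2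 + (3/2)*x1^2*y0^2*c + (-3)*x1^2*y0*y2*c + (-1)*x1^2*y0*X1 + 1*x1^2*y0*X2 + (-3/2)*x1^2*y1^2*c + 3*x1^2*y1*y2*c + 1*x1^2*y1*X1 + (-1)*x1^2*y1*X2 + (-1/2)*x1*y0^2*Y0 + 1*x1*y0^2*Y1 + (-1/2)*x1*y0^2*Y2 + 1*x1*y0*y1*Y0 + (-2)*x1*y0*y1*Y1 + 1*x1*y0*y1*Y2 + (-1/2)*x1*y1^2*Y0 + 1*x1*y1^2*Y1 + (-1/2)*x1*y1^2*Y2)*e2 + (1*x0^3*y0 + (-1)*x0^3*y1 + (-1/2)*x0^3*Y0 + (-1/2)*x0^3*Y1 + 1*x0^3*Y2 + (-1)*x0^2*x1*y0 + 1*x0^2*x1*y1 + (3/2)*x0^2*x1*Y0 + (3/2)*x0^2*x1*Y1 + (-3)*x0^2*x1*Y2 + (-1)*x0^2*x2*y0 + 1*x0^2*x2*y1 + (-3)*x0^2*y0^2*c + 6*x0^2*y0*y1*c + (-1)*x0^2*y0*X2 + (-3)*x0^2*y1^2*c + 1*x0^2*y1*X2 + (-1)*x0*x1^2*y0 + 1*x0*x1^2*y1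 + (-3/2)*x0*x1^2*Y0 + (-3/2)*x0*x1^2*Y1 + 3*x0*x1^2*Y2 + 2*x0*x1*x2*y0 + (-2)*x0*x1*x2*y1 + 6*x0*x1*y0^2*c + (-12)*x0*x1*y0*y1*c + 2*x0*x1*y0*X2 + 6*x0*x1*y1^2*c + (-2)*x0*x1*y1*X2 + (1/2)*x0*y0^2*Y0 + (1/2)*x0*y0^2*Y1 + (-1)*x0*y0^2*Y2 + (-1)*x0*y0*y1*Y0 + (-1)*x0*y0*y1*Y1 + 2*x0*y0*y1*Y2 + (1/2)*x0*y1^2*Y0 + (1/2)*x0*y1^2*Y1 + (-1)*x0*y1^2*Y2 + 1*x1^3*y0 + (-1)*x1^3*y1 + (1/2)*x1^3*Y0 + (1/2)*x1^3*Y1 + (-1)*x1^3*Y2 + (-1)*x1^2*x2*y0 + 1*x1^2*x2*y1 + (-3)*x1^2*y0^2*c + 6*x1^2*y0*y1*c + (-1)*x1^2*y0*X2 + (-3)*x1^2*y1^2*c + 1*x1^2*y1*X2 + (-1/2)*x1*y0^2*Y0 + (-1/2)*x1*y0^2*Y1 + 1*x1*y0^2*Y2 + 1*x1*y0*y1*Y0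 + 1*x1*y0*y1*Y1 + (-2)*x1*y0*y1*Y2 + (-1/2)*x1*y1^2*Y0 + (-1/2)*x1*y1^2*Y1 + 1*x1*y1^2*Y2)*e3 + (1*x0^4 + (-7/2)*x0^3*x1 + (-1/2)*x0^3*x2 + (9/4)*x0^3*y1*c + (-9/4)*x0^3*y2*c + (9/2)*x0^2*x1^2 + (3/2)*x0^2*x1*x2 + (-3/2)*x0^2*x1*y0*c + (-21/4)*x0^2*x1*y1*c + (27/4)*x0^2*x1*y2*c + (3/2)*x0^2*x2*y0*c + (-3/2)*x0^2*x2*y1*c + 1*x0^2*y0*y1 + 1*x0^2*y0*Y0 + (-1)*x0^2*y0*Y1 + (-1)*x0^2*y0*Y2 + (-1)*x0^2*y1^2 + (-1)*x0^2*y1*Y0 + 1*x0^2*y1*Y1 + 1*x0^2*y1*Y2 + (-5/2)*x0*x1^3 + (-3/2)*x0*x1^2*x2 + 3*x0*x1^2*y0*c + (15/4)*x0*x1^2*y1*c + (-27/4)*x0*x1^2*y2*c + (-3)*x0*x1*x2*y0*c + 3*x0*x1*x2*y1*c + (-1/2)*x0*x1*y0^2 + (-1)*x0*x1*y0*y1 +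 (-2)*x0*x1*y0*Y0 + 2*x0*x1*y0*Y1 + 2*x0*x1*y0*Y2 + (3/2)*x0*x1*y1^2 + 2*x0*x1*y1*Y0 + (-2)*x0*x1*y1*Y1 + (-2)*x0*x1*y1*Y2 + (1/2)*x0*x2*y0^2 + (-1)*x0*x2*y0*y1 + (1/2)*x0*x2*y1^2 + (-9/4)*x0*y0^2*y1*c + (9/4)*x0*y0^2*y2*c + (9/2)*x0*y0*y1^2*c + (-9/2)*x0*y0*y1*y2*c + (-9/4)*x0*y1^3*c + (9/4)*x0*y1^2*y2*c + (1/2)*x1^4 + (1/2)*x1^3*x2 + (-3/2)*x1^3*y0*c + (-3/4)*x1^3*y1*c + (9/4)*x1^3*y2*c + (3/2)*x1^2*x2*y0*c + (-3/2)*x1^2*x2*y1*c + (1/2)*x1^2*y0^2 + 1*x1^2*y0*Y0 + (-1)*x1^2*y0*Y1 + (-1)*x1^2*y0*Y2 + (-1/2)*x1^2*y1^2 + (-1)*x1^2*y1*Y0 + 1*x1^2*y1*Y1 + 1*x1^2*y1*Y2 + (-1/2)*x1*x2*y0^2 + 1*x1*x2*y0*y1 + (-1/2)*x1*x2*y1^2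 + (9/4)*x1*y0^2*y1*c + (-9/4)*x1*y0^2*y2*c + (-9/2)*x1*y0*y1^2*c + (9/2)*x1*y0*y1*y2*c + (9/4)*x1*y1^3*c + (-9/4)*x1*y1^2*y2*c)*e4 + ((-1/2)*x0^4 + (5/2)*x0^3*x1 + (-1/2)*x0^3*x2 + (-3/4)*x0^3*y0*c + (-3/2)*x0^3*y1*c + (9/4)*x0^3*y2*c + (-9/2)*x0^2*x1^2 + (3/2)*x0^2*x1*x2 + (21/4)*x0^2*x1*y0*c + (3/2)*x0^2*x1*y1*c + (-27/4)*x0^2*x1*y2*c + (-3)*x0^2*x2*y0*c + 3*x0^2*x2*y1*c + (-1/2)*x0^2*y0^2 + 1*x0^2*y0*y1 + 1*x0^2*y0*Y1 + (-1)*x0^2*y0*Y2 + (-1/2)*x0^2*y1^2 + (-1)*x0^2*y1*Y1 + 1*x0^2*y1*Y2 + (7/2)*x0*x1^3 + (-3/2)*x0*x1^2*x2 + (-33/4)*x0*x1^2*y0*c + (3/2)*x0*x1^2*y1*c + (27/4)*x0*x1^2*y2*c + 6*x0*x1*x2*y0*c + (-6)*x0*x1*x2*y1*c + (1/2)*x0*x1*y0^2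 + (-1)*x0*x1*y0*y1 + (-2)*x0*x1*y0*Y1 + 2*x0*x1*y0*Y2 + (1/2)*x0*x1*y1^2 + 2*x0*x1*y1*Y1 + (-2)*x0*x1*y1*Y2 + (1/2)*x0*x2*y0^2 + (-1)*x0*x2*y0*y1 + (1/2)*x0*x2*y1^2 + (9/4)*x0*y0^3*c + (-9/2)*x0*y0^2*y1*c + (-9/4)*x0*y0^2*y2*c + (9/4)*x0*y0*y1^2*c + (9/2)*x0*y0*y1*y2*c + (-9/4)*x0*y1^2*y2*c + (-1)*x1^4 + (1/2)*x1^3*x2 + (15/4)*x1^3*y0*c + (-3/2)*x1^3*y1*c + (-9/4)*x1^3*y2*c + (-3)*x1^2*x2*y0*c + 3*x1^2*x2*y1*c + 1*x1^2*y0*Y1 + (-1)*x1^2*y0*Y2 + (-1)*x1^2*y1*Y1 + 1*x1^2*y1*Y2 + (-1/2)*x1*x2*y0^2 + 1*x1*x2*y0*y1 + (-1/2)*x1*x2*y1^2 + (-9/4)*x1*y0^3*c + (9/2)*x1*y0^2*y1*c + (9/4)*x1*y0^2*y2*c + (-9/4)*x1*y0*y1^2*c + (-9/2)*x1*y0*y1*y2*c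 + (9/4)*x1*y1^2*y2*c)*e5 + ((-1/2)*x0^4 + 1*x0^3*x1 + 1*x0^3*x2 + (-3/4)*x0^3*y0*c + (3/4)*x0^3*y1*c + (-3)*x0^2*x1*x2 + (9/4)*x0^2*x1*y0*c + (-9/4)*x0^2*x1*y1*c + (-1/2)*x0^2*y0^2 + (-1)*x0^2*y0*y1 + 1*x0^2*y0*y2 + 1*x0^2*y0*Y2 + (3/2)*x0^2*y1^2 + (-1)*x0^2*y1*y2 + (-1)*x0^2*y1*Y2 + (-1)*x0*x1^3 + 3*x0*x1^2*x2 + (-9/4)*x0*x1^2*y0*c + (9/4)*x0*x1^2*y1*c + 2*x0*x1*y0^2 + (-2)*x0*x1*y0*y2 + (-2)*x0*x1*y0*Y2 + (-2)*x0*x1*y1^2 + 2*x0*x1*y1*y2 + 2*x0*x1*y1*Y2 + (-1)*x0*x2*y0^2 + 2*x0*x2*y0*y1 + (-1)*x0*x2*y1^2 + (-9/4)*x0*y0^3*c + (27/4)*x0*y0^2*y1*c + (-27/4)*x0*y0*y1^2*c + (9/4)*x0*y1^3*c + (1/2)*x1^4 + (-1)*x1^3*x2 + (3/4)*x1^3*y0*c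 + (-3/4)*x1^3*y1*c + (-3/2)*x1^2*y0^2 + 1*x1^2*y0*y1 + 1*x1^2*y0*y2 + 1*x1^2*y0*Y2 + (1/2)*x1^2*y1^2 + (-1)*x1^2*y1*y2 + (-1)*x1^2*y1*Y2 + 1*x1*x2*y0^2 + (-2)*x1*x2*y0*y1 + 1*x1*x2*y1^2 + (9/4)*x1*y0^3*c + (-27/4)*x1*y0^2*y1*c + (27/4)*x1*y0*y1^2*c + (-9/4)*x1*y1^3*c)*e6 + ((9/4)*x0^3*c^2 + (-1/3)*x0^3 + (-9/4)*x0^2*x1*c^2 + (1/3)*x0^2*x1 + (-9/2)*x0^2*x2*c^2 + (2/3)*x0^2*x2 + (-9/4)*x0*x1^2*c^2 + (1/3)*x0*x1^2 + 9*x0*x1*x2*c^2 + (-4/3)*x0*x1*x2 + (9/4)*x0*y0^2*c^2 + (-1/3)*x0*y0^2 + (-9/2)*x0*y0*y2*c^2 + (2/3)*x0*y0*y2 + (-9/4)*x0*y1^2*c^2 + (1/3)*x0*y1^2 + (9/2)*x0*y1*y2*c^2 + (-2/3)*x0*y1*y2 + (9/4)*x1^3*c^2 + (-1/3)*x1^3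 + (-9/2)*x1^2*x2*c^2 + (2/3)*x1^2*x2 + (-9/4)*x1*y0^2*c^2 + (1/3)*x1*y0^2 + (9/2)*x1*y0*y2*c^2 + (-2/3)*x1*y0*y2 + (9/4)*x1*y1^2*c^2 + (-1/3)*x1*y1^2 + (-9/2)*x1*y1*y2*c^2 + (2/3)*x1*y1*y2)*e7
  have keyp0x : (x0-gx)*s^2 = ((X0-gx)*(x1-x0)+(Y0-gy)*(y1-y0))*(x1-x0) := by linear_combination (1*x0 + (-1)*gx)*hs2 + ((-1)*y0^2 + 2*y0*y1 + (-1)*y1^2)*hgx + (1*x0*y0 + (-1)*x0*y1 + (-1)*x1*y0 + 1*x1*y1)*hgy + ((3/2)*x0^2 + (-3)*x0*x1 + (3/2)*x1^2 + (1/2)*y0^2 + (-1)*y0*y1 + (1/2)*y1^2)*e1 + ((1/2)*y0^2 + (-1)*y0*y1 + (1/2)*y1^2)*e2 + ((1/2)*y0^2 + (-1)*y0*y1 + (1/2)*y1^2)*e3 + (1*x0*y0 + (-1)*x0*y1 + (-1)*x1*y0 + 1*x1*y1)*e4 + ((-1/2)*x0*y0 + (1/2)*x0*y1 + (1/2)*x1*y0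 + (-1/2)*x1*y1)*e5 + ((-1/2)*x0*y0 + (1/2)*x0*y1 + (1/2)*x1*y0 + (-1/2)*x1*y1)*e6 + ((-3/2)*x0*c + (3/2)*x1*c + (-1/3)*y0 + (1/3)*y1)*e7
  have keyp0y : (y0-gy)*s^2 = ((X0-gx)*(x1-x0)+(Y0-gy)*(y1-y0))*(y1-y0) := by linear_combination (1*y0 + (-1)*gy)*hs2 + (1*x0*y0 + (-1)*x0*y1 + (-1)*x1*y0 + 1*x1*y1)*hgx + ((-1)*x0^2 + 2*x0*x1 + (-1)*x1^2)*hgy + (1*x0*y0 + (-1)*x0*y1 + (-1)*x1*y0 + 1*x1*y1)*e1 + ((-1/2)*x0*y0 + (1/2)*x0*y1 + (1/2)*x1*y0 + (-1/2)*x1*y1)*e2 + ((-1/2)*x0*y0 + (1/2)*x0*y1 + (1/2)*x1*y0 + (-1/2)*x1*y1)*e3 + ((1/2)*x0^2 + (-1)*x0*x1 + (1/2)*x1^2 + (3/2)*y0^2 + (-3)*y0*y1 + (3/2)*y1^2)*e4 + ((1/2)*x0^2 + (-1)*x0*x1 + (1/2)*x1^2)*e5 + ((1/2)*x0^2 + (-1)*x0*x1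 + (1/2)*x1^2)*e6 + ((1/3)*x0 + (-1/3)*x1 + (-3/2)*y0*c + (3/2)*y1*c)*e7
  have keyp1x : (x1-gx)*s^2 = ((X1-gx)*(x1-x0)+(Y1-gy)*(y1-y0))*(x1-x0) := by linear_combination (1*x1 + (-1)*gx)*hs2 + ((-1)*y0^2 + 2*y0*y1 + (-1)*y1^2)*hgx + (1*x0*y0 + (-1)*x0*y1 + (-1)*x1*y0 + 1*x1*y1)*hgy + ((1/2)*y0^2 + (-1)*y0*y1 + (1/2)*y1^2)*e1 + ((3/2)*x0^2 + (-3)*x0*x1 + (3/2)*x1^2 + (1/2)*y0^2 + (-1)*y0*y1 + (1/2)*y1^2)*e2 + ((1/2)*y0^2 + (-1)*y0*y1 + (1/2)*y1^2)*e3 + ((-1/2)*x0*y0 + (1/2)*x0*y1 + (1/2)*x1*y0 + (-1/2)*x1*y1)*e4 + (1*x0*y0 + (-1)*x0*y1 + (-1)*x1*y0 + 1*x1*y1)*e5 + ((-1/2)*x0*y0 + (1/2)*x0*y1 + (1/2)*x1*y0 + (-1/2)*x1*y1)*e6 + ((3/2)*x0*c + (-3/2)*x1*c + (-1/3)*y0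 + (1/3)*y1)*e7
  have keyp1y : (y1-gy)*s^2 = ((X1-gx)*(x1-x0)+(Y1-gy)*(y1-y0))*(y1-y0) := by linear_combination (1*y1 + (-1)*gy)*hs2 + (1*x0*y0 + (-1)*x0*y1 + (-1)*x1*y0 + 1*x1*y1)*hgx + ((-1)*x0^2 + 2*x0*x1 + (-1)*x1^2)*hgy + ((-1/2)*x0*y0 + (1/2)*x0*y1 + (1/2)*x1*y0 + (-1/2)*x1*y1)*e1 + (1*x0*y0 + (-1)*x0*y1 + (-1)*x1*y0 + 1*x1*y1)*e2 + ((-1/2)*x0*y0 + (1/2)*x0*y1 + (1/2)*x1*y0 + (-1/2)*x1*y1)*e3 + ((1/2)*x0^2 + (-1)*x0*x1 + (1/2)*x1^2)*e4 + ((1/2)*x0^2 + (-1)*x0*x1 + (1/2)*x1^2 + (3/2)*y0^2 + (-3)*y0*y1 + (3/2)*y1^2)*e5 + ((1/2)*x0^2 + (-1)*x0*x1 + (1/2)*x1^2)*e6 + ((1/3)*x0 + (-1/3)*x1 + (3/2)*y0*c + (-3/2)*y1*c)*e7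
  have keyp2x : (x2-gx)*s^2 = ((X2-gx)*(x1-x0)+(Y2-gy)*(y1-y0))*(x1-x0) := by linear_combination (1*x2 + (-1)*gx)*hs2 + ((-1)*y0^2 + 2*y0*y1 + (-1)*y1^2)*hgx + (1*x0*y0 + (-1)*x0*y1 + (-1)*x1*y0 + 1*x1*y1)*hgy + ((1/2)*y0^2 + (-1)*y0*y1 + (1/2)*y1^2)*e1 + ((1/2)*y0^2 + (-1)*y0*y1 + (1/2)*y1^2)*e2 + ((3/2)*x0^2 + (-3)*x0*x1 + (3/2)*x1^2 + (1/2)*y0^2 + (-1)*y0*y1 + (1/2)*y1^2)*e3 + ((-1/2)*x0*y0 + (1/2)*x0*y1 + (1/2)*x1*y0 + (-1/2)*x1*y1)*e4 + ((-1/2)*x0*y0 + (1/2)*x0*y1 + (1/2)*x1*y0 + (-1/2)*x1*y1)*e5 + (1*x0*y0 + (-1)*x0*y1 + (-1)*x1*y0 + 1*x1*y1)*e6 + ((2/3)*y0 + (-2/3)*y1)*e7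
  have keyp2y : (y2-gy)*s^2 = ((X2-gx)*(x1-x0)+(Y2-gy)*(y1-y0))*(y1-y0) := by linear_combination (1*y2 + (-1)*gy)*hs2 + (1*x0*y0 + (-1)*x0*y1 + (-1)*x1*y0 + 1*x1*y1)*hgx + ((-1)*x0^2 + 2*x0*x1 + (-1)*x1^2)*hgy + ((-1/2)*x0*y0 + (1/2)*x0*y1 + (1/2)*x1*y0 + (-1/2)*x1*y1)*e1 + ((-1/2)*x0*y0 + (1/2)*x0*y1 + (1/2)*x1*y0 + (-1/2)*x1*y1)*e2 + (1*x0*y0 + (-1)*x0*y1 + (-1)*x1*y0 + 1*x1*y1)*e3 + ((1/2)*x0^2 + (-1)*x0*x1 + (1/2)*x1^2)*e4 + ((1/2)*x0^2 + (-1)*x0*x1 + (1/2)*x1^2)*e5 + ((1/2)*x0^2 + (-1)*x0*x1 + (1/2)*x1^2 + (3/2)*y0^2 + (-3)*y0*y1 + (3/2)*y1^2)*e6 + ((-2/3)*x0 + (2/3)*x1)*e7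
  refine ⟨(x1-x0)/s, (y1-y0)/s, (((X0-gx)*(x1-x0)+(Y0-gy)*(y1-y0))^2 + ((X1-gx)*(x1-x0)+(Y1-gy)*(y1-y0))^2 + ((X2-gx)*(x1-x0)+(Y2-gy)*(y1-y0))^2)/s^2, ?_, ?_, ?_, ?_, ?_, ?_, ?_, ?_, ?_⟩
  · field_simp; linear_combination -hs2
  · field_simp; linear_combination keyc1
  · field_simp; linear_combination keyc2
  · field_simp; linear_combination keyp0x
  · field_simp; linear_combination keyp0y
  · field_simp; linear_combination keyp1x
  · field_simp; linear_combination keyp1y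
  · field_simp; linear_combination keyp2x
  · field_simp; linear_combination keyp2y


lemma conclude (k k' : Fin 3 → Fin 2 → ℝ) (v0 v1 μ : ℝ)
    (hunit : v0^2 + v1^2 = 1)
    (hc1 : ((k 0 0 - ((k 0 0 + k 1 0 + k 2 0)/3))^2 + (k 1 0 - ((k 0 0 + k 1 0 + k 2 0)/3))^2 + (k 2 0 - ((k 0 0 + k 1 0 + k 2 0)/3))^2)*v0 + ((k 0 0 - ((k 0 0 + k 1 0 + k 2 0)/3))*(k 0 1 - ((k 0 1 + k 1 1 + k 2 1)/3)) + (k 1 0 - ((k 0 0 + k 1 0 + k 2 0)/3))*(k 1 1 - ((k 0 1 + k 1 1 + k 2 1)/3)) + (k 2 0 - ((k 0 0 + k 1 0 + k 2 0)/3))*(k 2 1 - ((k 0 1 + k 1 1 + k 2 1)/3)))*v1 = μ*v0)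
    (hc2 : ((k 0 0 - ((k 0 0 + k 1 0 + k 2 0)/3))*(k 0 1 - ((k 0 1 + k 1 1 + k 2 1)/3)) + (k 1 0 - ((k 0 0 + k 1 0 + k 2 0)/3))*(k 1 1 - ((k 0 1 + k 1 1 + k 2 1)/3)) + (k 2 0 - ((k 0 0 + k 1 0 + k 2 0)/3))*(k 2 1 - ((k 0 1 + k 1 1 + k 2 1)/3)))*v0 + ((k 0 1 - ((k 0 1 + k 1 1 + k 2 1)/3))^2 + (k 1 1 - ((k 0 1 + k 1 1 + k 2 1)/3))^2 + (k 2 1 - ((k 0 1 + k 1 1 + k 2 1)/3))^2)*v1 = μ*v1)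
    (q0x : k' 0 0 = ((k 0 0 + k 1 0 + k 2 0)/3) + ((k 0 0 - ((k 0 0 + k 1 0 + k 2 0)/3))*v0 + (k 0 1 - ((k 0 1 + k 1 1 + k 2 1)/3))*v1)*v0)
    (q0y : k' 0 1 = ((k 0 1 + k 1 1 + k 2 1)/3) + ((k 0 0 - ((k 0 0 + k 1 0 + k 2 0)/3))*v0 + (k 0 1 - ((k 0 1 + k 1 1 + k 2 1)/3))*v1)*v1)
    (q1x : k' 1 0 = ((k 0 0 + k 1 0 + k 2 0)/3) + ((k 1 0 - ((k 0 0 + k 1 0 + k 2 0)/3))*v0 + (k 1 1 - ((k 0 1 + k 1 1 + k 2 1)/3))*v1)*v0)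
    (q1y : k' 1 1 = ((k 0 1 + k 1 1 + k 2 1)/3) + ((k 1 0 - ((k 0 0 + k 1 0 + k 2 0)/3))*v0 + (k 1 1 - ((k 0 1 + k 1 1 + k 2 1)/3))*v1)*v1)
    (q2x : k' 2 0 = ((k 0 0 + k 1 0 + k 2 0)/3) + ((k 2 0 - ((k 0 0 + k 1 0 + k 2 0)/3))*v0 + (k 2 1 - ((k 0 1 + k 1 1 + k 2 1)/3))*v1)*v0)
    (q2y : k' 2 1 = ((k 0 1 + k 1 1 + k 2 1)/3) + ((k 2 0 - ((k 0 0 + k 1 0 + k 2 0)/3))*v0 + (k 2 1 - ((k 0 1 + k 1 1 + k 2 1)/3))*v1)*v1) :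
    ∃ v : Fin 2 → ℝ, dot v v = 1 ∧ (∃ μ : ℝ, (covMat k).mulVec v = μ • v) ∧
      ∀ i, k' i = centroid3 k + dot (k i - centroid3 k) v • v := by
  refine ⟨![v0, v1], ?_, ⟨μ, ?_⟩, ?_⟩
  · simp [dot]
    linear_combination hunit
  · funext r
    fin_cases r
    · simp [covMat, centroid3, Matrix.mulVec, dotProduct, Fin.sum_univ_two,
        Fin.sum_univ_three]
      linear_combination hc1
    · simp [covMat, centroid3, Matrix.mulVec, dotProduct, Fin.sum_univ_two,
        Fin.sum_univ_three]
      linear_combination hc2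
  · intro i
    fin_cases i <;> funext j <;> fin_cases j
    · simp [centroid3, dot]; linear_combination q0x
    · simp [centroid3, dot]; linear_combination q0y
    · simp [centroid3, dot]; linear_combination q1x
    · simp [centroid3, dot]; linear_combination q1y
    · simp [centroid3, dot]; linear_combination q2x
    · simp [centroid3, dot]; linear_combination q2y

lemma dist_ne (a b : Fin 2 → ℝ) (hab : a ≠ b) : (b 0 - a 0)^2 + (b 1 - a 1)^2 ≠ 0 := by
  intro h
  apply hab
  have h0 : b 0 - a 0 = 0 := by nlinarith [sq_nonneg (b 0 - a 0), sq_nonneg (b 1 - a 1)]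
  have h1 : b 1 - a 1 = 0 := by nlinarith [sq_nonneg (b 0 - a 0), sq_nonneg (b 1 - a 1)]
  funext j
  fin_cases j
  · show a 0 = b 0; linarith
  · show a 1 = b 1; linarith


/-- Every critical point of the Lagrangian `L = obj + λ C_P` lying on the collinearity
variety either is a singular point of `C_P = 0` (all three points coincide), or consists of
the orthogonal projections of the `k i` onto a line through their centroid in a principal
direction of their covariance matrix. -/
theorem lagrange_critical_points_CP (k k' : Fin 3 → Fin 2 → ℝ)
    (hconstraint : CP k' = 0)
    (hcrit : ∃ lam : ℝ, fderiv ℝ (fun q => obj k q + lam * CP q) k' = 0) :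
    (k' 0 = k' 1 ∧ k' 1 = k' 2) ∨
      ∃ v : Fin 2 → ℝ, dot v v = 1 ∧ (∃ μ : ℝ, (covMat k).mulVec v = μ • v) ∧
        ∀ i, k' i = centroid3 k + dot (k i - centroid3 k) v • v := by
  obtain ⟨lam, hcrit0⟩ := hcrit
  have hq : ∀ (i : Fin 3) (j : Fin 2), DifferentiableAt ℝ (fun q : Fin 3 → Fin 2 → ℝ => q i j) k' :=
    fun i j => ((ContinuousLinearMap.proj j).comp
      (ContinuousLinearMap.proj (R := ℝ) (φ := fun _ : Fin 3 => Fin 2 → ℝ) i)).differentiableAt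
  have hdiff : DifferentiableAt ℝ (fun q => obj k q + lam * CP q) k' := by
    unfold obj CP
    simp only [Matrix.det_fin_three, Matrix.of_apply, Fin.sum_univ_three, Matrix.cons_val',
      Matrix.cons_val_zero, Matrix.cons_val_one, Matrix.head_cons, Matrix.empty_val',
      Matrix.cons_val_fin_one, Matrix.head_fin_const, Matrix.cons_val_two, Matrix.tail_cons]
    repeat
      first
      | exact hq _ _
      | exact differentiableAt_const _
      | apply DifferentiableAt.add
      | apply DifferentiableAt.sub
      | apply DifferentiableAt.const_mul
      | apply DifferentiableAt.mul
      | apply DifferentiableAt.pow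
      | apply DifferentiableAt.neg
  have hA00 : 2/3*(k' 0 0 - k 0 0) + lam*(k' 1 1 - k' 2 1) = 0 :=
    partial_eq_zero hdiff hcrit0 ![![(1:ℝ),0],![0,0],![0,0]]
      (D := obj k k' + lam * CP k') (B := 1/3)
      (by intro t
          simp [obj, CP, Matrix.det_fin_three, Fin.sum_univ_three, Matrix.vecHead, Matrix.vecTail]
          ring)
  have hA10 : 2/3*(k' 1 0 - k 1 0) + lam*(k' 2 1 - k' 0 1) = 0 :=
    partial_eq_zero hdiff hcrit0 ![![(0:ℝ),0],![1,0],![0,0]]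
      (D := obj k k' + lam * CP k') (B := 1/3)
      (by intro t
          simp [obj, CP, Matrix.det_fin_three, Fin.sum_univ_three, Matrix.vecHead, Matrix.vecTail]
          ring)
  have hA20 : 2/3*(k' 2 0 - k 2 0) + lam*(k' 0 1 - k' 1 1) = 0 :=
    partial_eq_zero hdiff hcrit0 ![![(0:ℝ),0],![0,0],![1,0]]
      (D := obj k k' + lam * CP k') (B := 1/3)
      (by intro t
          simp [obj, CP, Matrix.det_fin_three, Fin.sum_univ_three, Matrix.vecHead, Matrix.vecTail]
          ring)
  have hA01 : 2/3*(k' 0 1 - k 0 1) + lam*(k' 2 0 - k' 1 0) = 0 :=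
    partial_eq_zero hdiff hcrit0 ![![(0:ℝ),1],![0,0],![0,0]]
      (D := obj k k' + lam * CP k') (B := 1/3)
      (by intro t
          simp [obj, CP, Matrix.det_fin_three, Fin.sum_univ_three, Matrix.vecHead, Matrix.vecTail]
          ring)
  have hA11 : 2/3*(k' 1 1 - k 1 1) + lam*(k' 0 0 - k' 2 0) = 0 :=
    partial_eq_zero hdiff hcrit0 ![![(0:ℝ),0],![0,1],![0,0]]
      (D := obj k k' + lam * CP k') (B := 1/3)
      (by intro t
          simp [obj, CP, Matrix.det_fin_three, Fin.sum_univ_three, Matrix.vecHead, Matrix.vecTail]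
          ring)
  have hA21 : 2/3*(k' 2 1 - k 2 1) + lam*(k' 1 0 - k' 0 0) = 0 :=
    partial_eq_zero hdiff hcrit0 ![![(0:ℝ),0],![0,0],![0,1]]
      (D := obj k k' + lam * CP k') (B := 1/3)
      (by intro t
          simp [obj, CP, Matrix.det_fin_three, Fin.sum_univ_three, Matrix.vecHead, Matrix.vecTail]
          ring)
  have e7' : k' 1 0 * k' 2 1 - k' 2 0 * k' 1 1 - k' 0 0 * k' 2 1 + k' 2 0 * k' 0 1
      + k' 0 0 * k' 1 1 - k' 1 0 * k' 0 1 = 0 := by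
    have h := hconstraint
    unfold CP at h
    simp [Matrix.det_fin_three] at h
    linear_combination h
  by_cases h01 : k' 0 = k' 1
  · by_cases h12 : k' 1 = k' 2
    · exact Or.inl ⟨h01, h12⟩
    · -- use points (1,2,0)
      obtain ⟨v0, v1, μ, hunit, hc1, hc2, q1x, q1y, q2x, q2y, q0x, q0y⟩ :=
        helperCP (k' 1 0) (k' 2 0) (k' 0 0) (k' 1 1) (k' 2 1) (k' 0 1)
          (k 1 0) (k 2 0) (k 0 0) (k 1 1) (k 2 1) (k 0 1) lam
          ((k 1 0 + k 2 0 + k 0 0)/3) ((k 1 1 + k 2 1 + k 0 1)/3) rfl rfl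
          hA10 hA20 hA00 hA11 hA21 hA01 (by linear_combination e7') (dist_ne _ _ h12)
      exact Or.inr (conclude k k' v0 v1 μ (by linear_combination hunit)
        (by linear_combination hc1) (by linear_combination hc2)
        (by linear_combination q0x) (by linear_combination q0y)
        (by linear_combination q1x) (by linear_combination q1y)
        (by linear_combination q2x) (by linear_combination q2y))
  · obtain ⟨v0, v1, μ, hunit, hc1, hc2, q0x, q0y, q1x, q1y, q2x, q2y⟩ :=
      helperCP (k' 0 0) (k' 1 0) (k' 2 0) (k' 0 1) (k' 1 1) (k' 2 1)
        (k 0 0) (k 1 0) (k 2 0) (k 0 1) (k 1 1) (k 2 1) lam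
        ((k 0 0 + k 1 0 + k 2 0)/3) ((k 0 1 + k 1 1 + k 2 1)/3) rfl rfl
        hA00 hA10 hA20 hA01 hA11 hA21 (by linear_combination e7') (dist_ne _ _ h01)
    exact Or.inr (conclude k k' v0 v1 μ (by linear_combination hunit)
      (by linear_combination hc1) (by linear_combination hc2)
      (by linear_combination q0x) (by linear_combination q0y)
      (by linear_combination q1x) (by linear_combination q1y)
      (by linear_combination q2x) (by linear_combination q2y))
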